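/- Let 𝓜 be a convex set of real symmetric m×m matrices, let G be symmetric positive semidefinite, and let P ∈ 𝓜 satisfy the projection variational inequality ⟨G − P, Q − P⟩ ≤ 0 for all Q ∈ 𝓜 (i.e., P is the orthogonal projection of G onto 𝓜 in the trace inner product). Write P = P₊ − P₋ with P₊, P₋ positive semidefinite and ⟨P₊, P₋⟩ = 0 (the Moreau decomposition of P with respect to the positive semidefinite cone). If P₊ ∈ 𝓜, then P₋ = 0, i.e., P is positive semidefinite. -/

import Mathlib

open Matrix

private lemma psd_trace_nonneg {n : ℕ} {A : Matrix (Fin n) (Fin n) ℝ}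
    (hA : A.PosSemidef) : 0 ≤ A.trace := by
  rw [Matrix.trace]
  apply Finset.sum_nonneg
  intro i _
  have := hA.dotProduct_mulVec_nonneg (Pi.single i 1)
  simpa [Matrix.diag, dotProduct, mulVec, Pi.single_apply, Finset.sum_ite_eq] using this

open scoped MatrixOrder in
private lemma psd_trace_mul_nonneg {n : ℕ} {A B : Matrix (Fin n) (Fin n) ℝ}
    (hA : A.PosSemidef) (hB : B.PosSemidef) : 0 ≤ (A * B).trace := by
  have hS : (CFC.sqrt B) * (CFC.sqrt B) = B := CFC.sqrt_mul_sqrt_self B hB.nonneg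
  have hsymm : (CFC.sqrt B).conjTranspose = (CFC.sqrt B) := (CFC.sqrt_nonneg B).posSemidef.1
  have hpsd : ((CFC.sqrt B) * A * (CFC.sqrt B)ᴴ).PosSemidef := hA.mul_mul_conjTranspose_same _
  rw [hsymm] at hpsd
  have : (A * B).trace = ((CFC.sqrt B) * A * (CFC.sqrt B)).trace := by
    conv_lhs => rw [← hS]
    rw [← Matrix.mul_assoc, trace_mul_cycle]
  rw [this]
  exact psd_trace_nonneg hpsd

private lemma trace_transpose_mul_self_eq_zero {n : ℕ} {A : Matrix (Fin n) (Fin n) ℝ}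
    (h : (Aᵀ * A).trace = 0) : A = 0 := by
  have hnn : ∀ j ∈ Finset.univ, (0:ℝ) ≤ (Aᵀ * A) j j := by
    intro j _
    simp only [Matrix.mul_apply, Matrix.transpose_apply]
    exact Finset.sum_nonneg fun i _ => mul_self_nonneg _
  rw [Matrix.trace] at h
  have hzero := (Finset.sum_eq_zero_iff_of_nonneg hnn).mp h
  ext i j
  have hj := hzero j (Finset.mem_univ j)
  simp only [Matrix.diag, Matrix.mul_apply, Matrix.transpose_apply] at hj
  have := (Finset.sum_eq_zero_iff_of_nonneg (fun i _ => mul_self_nonneg (A i j))).mp hj i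
    (Finset.mem_univ i)
  simpa [mul_self_eq_zero] using this

/-- If `P` is the projection of a positive semidefinite `G` onto a convex set `𝓜` of
symmetric matrices and the positive part `P₊` of `P` belongs to `𝓜`, then `P₋ = 0`,
i.e. `P` is positive semidefinite. -/
theorem proj_of_psd_positive_part {m : ℕ}
    (𝓜 : Set (Matrix (Fin m) (Fin m) ℝ)) (hconvS : Convex ℝ 𝓜)
    (hsym : ∀ M ∈ 𝓜, M.IsSymm)
    (G : Matrix (Fin m) (Fin m) ℝ) (hG : G.PosSemidef)
    (P : Matrix (Fin m) (Fin m) ℝ) (hP : P ∈ 𝓜)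
    (hproj : ∀ Q ∈ 𝓜, ((G - P)ᵀ * (Q - P)).trace ≤ 0)
    (Pp Pm : Matrix (Fin m) (Fin m) ℝ)
    (hPp : Pp.PosSemidef) (hPm : Pm.PosSemidef)
    (hdec : P = Pp - Pm) (horth : (Ppᵀ * Pm).trace = 0)
    (hPp𝓜 : Pp ∈ 𝓜) :
    Pm = 0 := by
  have key := hproj Pp hPp𝓜
  have hPmeq : Pp - P = Pm := by rw [hdec]; exact sub_sub_cancel Pp Pm
  rw [hPmeq] at key
  have hGsym : Gᵀ = G := by
    rw [← conjTranspose_eq_transpose_of_trivial]; exact hG.1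
  have hexp : ((G - P)ᵀ * Pm).trace
      = (G * Pm).trace - (Ppᵀ * Pm).trace + (Pmᵀ * Pm).trace := by
    rw [hdec]
    simp only [Matrix.transpose_sub, Matrix.sub_mul, Matrix.trace_sub, hGsym]
    ring
  rw [hexp, horth] at key
  have hG0 : 0 ≤ (G * Pm).trace := psd_trace_mul_nonneg hG hPm
  have hself : 0 ≤ (Pmᵀ * Pm).trace := by
    rw [Matrix.trace]
    refine Finset.sum_nonneg fun j _ => ?_
    simp only [Matrix.diag, Matrix.mul_apply, Matrix.transpose_apply]
    exact Finset.sum_nonneg fun i _ => mul_self_nonneg _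
  exact trace_transpose_mul_self_eq_zero (le_antisymm (by linarith) hself)
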